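/- Let q be odd, χ a nontrivial character of (F_q,+), and ρ an irreducible unitary representation of H(W), W = F_q^{2n}, on a finite-dimensional complex Hilbert space V, with central character χ. Then the operators ρ(w,0), w ∈ W, form an orthogonal basis of End(V) with respect to the normalized Hilbert–Schmidt inner product B(T,S) = (1/dim V)·trace(T S^*), each of norm 1; equivalently, the Weyl transform f ↦ Σ_{w∈W} f(w)·ρ(w,0) is a bijective isometry from ℓ²(W) (counting measure) onto End(V) equipped with B. -/

import Mathlib

/-!
STATEMENT 4: The Weyl transform: for an irreducible unitary representation ρ
of H(W) with nontrivial central character χ, the operators ρ(w,0), w ∈ W, form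
an orthogonal basis of End(V) for the normalized Hilbert–Schmidt inner
product, each of norm 1.
-/

open Matrix

set_option linter.unusedSectionVars false

namespace Stmt4

/-- The standard symplectic form on `W = F^n × F^n`:
`⟨(x,y),(x',y')⟩ = x·y' − y·x'`. -/
def symp {F : Type} [Field F] {n : ℕ} (u v : (Fin n → F) × (Fin n → F)) : F :=
  u.1 ⬝ᵥ v.2 - u.2 ⬝ᵥ v.1

/-- The Heisenberg group `H(W) = W ⊕ F` attached to `W = F^n × F^n`, with
product `(w,t)·(w',t') = (w + w', t + t' + ½⟨w,w'⟩)`. -/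
@[ext]
structure Heis (F : Type) [Field F] (n : ℕ) where
  w : (Fin n → F) × (Fin n → F)
  t : F

namespace Heis

variable {F : Type} [Field F] {n : ℕ}

instance : Mul (Heis F n) :=
  ⟨fun a b => ⟨a.w + b.w, a.t + b.t + (2 : F)⁻¹ * symp a.w b.w⟩⟩

instance : One (Heis F n) := ⟨⟨0, 0⟩⟩

instance : Inv (Heis F n) := ⟨fun a => ⟨-a.w, -a.t⟩⟩

lemma mul_w (a b : Heis F n) : (a * b).w = a.w + b.w := rfl
lemma mul_t (a b : Heis F n) : (a * b).t = a.t + b.t + (2 : F)⁻¹ * symp a.w b.w := rfl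
lemma one_w : (1 : Heis F n).w = 0 := rfl
lemma one_t : (1 : Heis F n).t = 0 := rfl
lemma inv_w (a : Heis F n) : (a⁻¹).w = -a.w := rfl
lemma inv_t (a : Heis F n) : (a⁻¹).t = -a.t := rfl

lemma symp_self (u : (Fin n → F) × (Fin n → F)) : symp u u = 0 := by
  simp [symp, dotProduct_comm]

instance : Group (Heis F n) where
  mul_assoc a b c := by
    refine Heis.ext ?_ ?_
    · simp [mul_w, add_assoc]
    · simp only [mul_t, mul_w, symp, Prod.fst_add, Prod.snd_add,
        add_dotProduct, dotProduct_add]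
      ring
  one_mul a := by
    refine Heis.ext ?_ ?_
    · simp [mul_w, one_w]
    · simp [mul_t, one_w, one_t, symp]
  mul_one a := by
    refine Heis.ext ?_ ?_
    · simp [mul_w, one_w]
    · simp [mul_t, one_w, one_t, symp]
  inv_mul_cancel a := by
    refine Heis.ext ?_ ?_
    · simp [mul_w, inv_w, one_w]
    · have h : symp (-a.w) a.w = 0 := by
        simp only [symp, Prod.fst_neg, Prod.snd_neg, neg_dotProduct]
        rw [dotProduct_comm]
        ring
      simp [mul_t, inv_w, inv_t, one_t, h]

end Heis

/-- A representation `ρ` of the Heisenberg group has central character `χ` if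
the central element `(0,t)` acts by the scalar `χ t`. -/
def HasCentralChar {F : Type} [Field F] {n : ℕ} {V : Type} [AddCommGroup V] [Module ℂ V]
    (ρ : Representation ℂ (Heis F n) V) (χ : AddChar F ℂ) : Prop :=
  ∀ t : F, ∀ v : V, ρ ⟨0, t⟩ v = χ t • v

/-- Irreducibility of a representation: the space is nonzero, and the only
invariant subspaces are `⊥` and `⊤`. -/
def IsIrred {G : Type} [Group G] {V : Type} [AddCommGroup V] [Module ℂ V]
    (ρ : Representation ℂ G V) : Prop :=
  (∃ v : V, v ≠ 0) ∧
    ∀ p : Submodule ℂ V, (∀ g : G, ∀ v ∈ p, ρ g v ∈ p) → p = ⊥ ∨ p = ⊤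

variable {F : Type} [Field F] {n : ℕ}

/-- The normalized Hilbert–Schmidt inner product
`B(T,S) = (1/dim V) · trace (T S^*)` on `End(V)`. -/
noncomputable def hsForm {V : Type} [NormedAddCommGroup V] [InnerProductSpace ℂ V]
    [FiniteDimensional ℂ V] (T S : V →ₗ[ℂ] V) : ℂ :=
  LinearMap.trace ℂ V (T ∘ₗ LinearMap.adjoint S) / (Module.finrank ℂ V : ℂ)


section Aux

variable {F : Type} [Field F] {n : ℕ}

lemma symp_add_left (a b c : (Fin n → F) × (Fin n → F)) :
    symp (a + b) c = symp a c + symp b c := by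
  simp only [symp, Prod.fst_add, Prod.snd_add, add_dotProduct]
  ring

lemma symp_add_right (a b c : (Fin n → F) × (Fin n → F)) :
    symp a (b + c) = symp a b + symp a c := by
  simp only [symp, Prod.fst_add, Prod.snd_add, dotProduct_add]
  ring

lemma symp_anti (a b : (Fin n → F) × (Fin n → F)) : symp a b = - symp b a := by
  simp only [symp]
  rw [dotProduct_comm a.1 b.2, dotProduct_comm a.2 b.1]
  ring

lemma symp_neg_left (a b : (Fin n → F) × (Fin n → F)) : symp (-a) b = - symp a b := by
  simp only [symp, Prod.fst_neg, Prod.snd_neg, neg_dotProduct]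
  ring

lemma symp_neg_right (a b : (Fin n → F) × (Fin n → F)) : symp a (-b) = - symp a b := by
  simp only [symp, Prod.fst_neg, Prod.snd_neg, dotProduct_neg]
  ring

lemma symp_zero_left (a : (Fin n → F) × (Fin n → F)) : symp 0 a = 0 := by
  simp [symp]

lemma symp_zero_right (a : (Fin n → F) × (Fin n → F)) : symp a 0 = 0 := by
  simp [symp]

lemma symp_neg_neg (a b : (Fin n → F) × (Fin n → F)) : symp (-a) (-b) = symp a b := by
  rw [symp_neg_left, symp_neg_right, neg_neg]

/-- `v ↦ symp v u` as an additive monoid hom. -/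
def sympHom (u : (Fin n → F) × (Fin n → F)) : ((Fin n → F) × (Fin n → F)) →+ F where
  toFun v := symp v u
  map_zero' := symp_zero_left u
  map_add' a b := symp_add_left a b u

lemma symp_surj {u : (Fin n → F) × (Fin n → F)} (hu : u ≠ 0) (s : F) :
    ∃ v : (Fin n → F) × (Fin n → F), symp v u = s := by
  have h : u.1 ≠ 0 ∨ u.2 ≠ 0 := by
    by_contra h
    push_neg at h
    exact hu (Prod.ext h.1 h.2)
  rcases h with h | h
  · obtain ⟨i, hi⟩ := Function.ne_iff.1 h
    refine ⟨(0, Pi.single i (-s / u.1 i)), ?_⟩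
    simp only [symp, zero_dotProduct, single_dotProduct]
    rw [div_mul_cancel₀ _ (by simpa using hi)]
    ring
  · obtain ⟨i, hi⟩ := Function.ne_iff.1 h
    refine ⟨(Pi.single i (s / u.2 i), 0), ?_⟩
    simp only [symp, zero_dotProduct, single_dotProduct]
    rw [div_mul_cancel₀ _ (by simpa using hi)]
    ring

lemma sum_symp_char [Fintype F] (χ : AddChar F ℂ) (hχ : χ ≠ 1)
    {u : (Fin n → F) × (Fin n → F)} (hu : u ≠ 0) :
    ∑ v : (Fin n → F) × (Fin n → F), χ (symp v u) = 0 := by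
  have hne : (χ.compAddMonoidHom (sympHom u)) ≠ 0 := by
    rw [AddChar.ne_zero_iff]
    obtain ⟨s, hs⟩ := AddChar.ne_one_iff.1 hχ
    obtain ⟨v, hv⟩ := symp_surj hu s
    exact ⟨v, by simpa [sympHom, hv] using hs⟩
  simpa [sympHom] using AddChar.sum_eq_zero_iff_ne_zero.2 hne

variable {V : Type} [NormedAddCommGroup V] [InnerProductSpace ℂ V] [FiniteDimensional ℂ V]
variable {χ : AddChar F ℂ} {ρ : Representation ℂ (Heis F n) V}

lemma rho_eq (hcc : HasCentralChar ρ χ) (u : (Fin n → F) × (Fin n → F)) (t : F) :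
    ρ ⟨u, t⟩ = χ t • ρ ⟨u, 0⟩ := by
  have h : (⟨u, t⟩ : Heis F n) = (⟨0, t⟩ : Heis F n) * ⟨u, 0⟩ := by
    refine Heis.ext ?_ ?_
    · show u = 0 + u
      simp
    · show t = t + 0 + (2 : F)⁻¹ * symp 0 u
      rw [symp_zero_left]
      ring
  rw [h, _root_.map_mul]
  ext v
  simpa using hcc t ((ρ ⟨u, 0⟩) v)

lemma P_mul (hcc : HasCentralChar ρ χ) (w w' : (Fin n → F) × (Fin n → F)) :
    ρ ⟨w, 0⟩ * ρ ⟨w', 0⟩ = χ ((2 : F)⁻¹ * symp w w') • ρ ⟨w + w', 0⟩ := by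
  rw [← _root_.map_mul]
  have h : (⟨w, 0⟩ : Heis F n) * ⟨w', 0⟩ = ⟨w + w', (2 : F)⁻¹ * symp w w'⟩ := by
    refine Heis.ext rfl ?_
    show (0 : F) + 0 + (2 : F)⁻¹ * symp w w' = (2 : F)⁻¹ * symp w w'
    ring
  rw [h, rho_eq hcc]

lemma P_one : ρ ⟨0, 0⟩ = 1 := by
  have h : (⟨0, 0⟩ : Heis F n) = 1 := rfl
  rw [h, _root_.map_one]

lemma P_mul_neg (hcc : HasCentralChar ρ χ) (w : (Fin n → F) × (Fin n → F)) :
    ρ ⟨w, 0⟩ * ρ ⟨-w, 0⟩ = 1 := by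
  rw [P_mul hcc]
  have h1 : symp w (-w) = 0 := by rw [symp_neg_right, Heis.symp_self, neg_zero]
  rw [h1, mul_zero, AddChar.map_zero_eq_one, one_smul, add_neg_cancel, P_one]

lemma schur (hirr : IsIrred ρ) (T : V →ₗ[ℂ] V) (hT : ∀ g, ρ g * T = T * ρ g) :
    ∃ c : ℂ, T = c • (1 : V →ₗ[ℂ] V) := by
  obtain ⟨v0, hv0⟩ := hirr.1
  haveI : Nontrivial V := ⟨⟨v0, 0, hv0⟩⟩
  obtain ⟨c, hc⟩ := Module.End.exists_eigenvalue (T : Module.End ℂ V)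
  obtain ⟨v, hv⟩ := hc.exists_hasEigenvector
  refine ⟨c, ?_⟩
  set p : Submodule ℂ V := LinearMap.ker (T - c • (1 : V →ₗ[ℂ] V)) with hp
  have hmem : ∀ x, x ∈ p ↔ T x = c • x := by
    intro x
    rw [hp, LinearMap.mem_ker, LinearMap.sub_apply, LinearMap.smul_apply, Module.End.one_apply,
      sub_eq_zero]
  have hinv : ∀ g : Heis F n, ∀ x ∈ p, ρ g x ∈ p := by
    intro g x hx
    rw [hmem] at hx ⊢
    have hcomm := congrArg (fun f : V →ₗ[ℂ] V => f x) (hT g)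
    simp only [Module.End.mul_apply] at hcomm
    rw [← hcomm, hx, _root_.map_smul]
  rcases hirr.2 p hinv with h | h
  · exfalso
    have hvp : v ∈ p := by rw [hmem]; exact hv.apply_eq_smul
    rw [h, Submodule.mem_bot] at hvp
    exact hv.2 hvp
  · ext x
    have hx : x ∈ p := h ▸ Submodule.mem_top
    rw [hmem] at hx
    simpa using hx

lemma adj_rho (hu : ∀ (h : Heis F n) (u v : V), (inner ℂ (ρ h u) (ρ h v) : ℂ) = inner ℂ u v)
    (g : Heis F n) : LinearMap.adjoint (ρ g : V →ₗ[ℂ] V) = ρ g⁻¹ := by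
  ext v
  refine ext_inner_right ℂ fun u => ?_
  rw [LinearMap.adjoint_inner_left]
  have h1 := hu g ((ρ g⁻¹) v) u
  have h2 : (ρ g) ((ρ g⁻¹) v) = v := by
    have h3 : ρ g * ρ g⁻¹ = 1 := by rw [← _root_.map_mul, mul_inv_cancel, _root_.map_one]
    calc (ρ g) ((ρ g⁻¹) v) = (ρ g * ρ g⁻¹) v := rfl
    _ = v := by rw [h3]; rfl
  rw [h2] at h1
  exact h1

lemma trace_P_eq_zero (hcc : HasCentralChar ρ χ) (hχ : χ ≠ 1)
    (h2 : (2 : F)⁻¹ + (2 : F)⁻¹ = 1) {u : (Fin n → F) × (Fin n → F)} (hu : u ≠ 0) :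
    LinearMap.trace ℂ V (ρ ⟨u, 0⟩) = 0 := by
  obtain ⟨s, hs⟩ := AddChar.ne_one_iff.1 hχ
  obtain ⟨v, hv⟩ := symp_surj hu s
  have hg : (⟨v, 0⟩ : Heis F n) * ⟨u, 0⟩ * (⟨v, 0⟩ : Heis F n)⁻¹ = ⟨u, symp v u⟩ := by
    refine Heis.ext ?_ ?_
    · show v + u + -v = u
      abel
    · show (0 : F) + 0 + (2 : F)⁻¹ * symp v u + -0 + (2 : F)⁻¹ * symp (v + u) (-v) = symp v u
      rw [symp_neg_right, symp_add_left, Heis.symp_self, symp_anti u v]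
      linear_combination (symp v u) * h2
  have htr : LinearMap.trace ℂ V (ρ ⟨u, symp v u⟩) = LinearMap.trace ℂ V (ρ ⟨u, 0⟩) := by
    rw [← hg]
    calc LinearMap.trace ℂ V (ρ (⟨v, 0⟩ * ⟨u, 0⟩ * (⟨v, 0⟩ : Heis F n)⁻¹))
        = LinearMap.trace ℂ V (ρ (⟨v, 0⟩ * ⟨u, 0⟩) * ρ ((⟨v, 0⟩ : Heis F n)⁻¹)) := by
          rw [_root_.map_mul ρ]
      _ = LinearMap.trace ℂ V (ρ ((⟨v, 0⟩ : Heis F n)⁻¹) * ρ (⟨v, 0⟩ * ⟨u, 0⟩)) :=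
          LinearMap.trace_mul_comm ℂ _ _
      _ = LinearMap.trace ℂ V (ρ ((⟨v, 0⟩ : Heis F n)⁻¹ * (⟨v, 0⟩ * ⟨u, 0⟩))) := by
          rw [← _root_.map_mul ρ]
      _ = LinearMap.trace ℂ V (ρ ⟨u, 0⟩) := by rw [inv_mul_cancel_left]
  rw [rho_eq hcc, _root_.map_smul, smul_eq_mul, hv] at htr
  by_contra h0
  exact hs (mul_right_cancel₀ h0 (by rw [htr, one_mul]))

lemma hsForm_P (hcc : HasCentralChar ρ χ)
    (hun : ∀ (h : Heis F n) (u v : V), (inner ℂ (ρ h u) (ρ h v) : ℂ) = inner ℂ u v)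
    (w w' : (Fin n → F) × (Fin n → F)) :
    hsForm (ρ ⟨w, 0⟩ : V →ₗ[ℂ] V) (ρ ⟨w', 0⟩) =
      χ ((2 : F)⁻¹ * symp w (-w')) * LinearMap.trace ℂ V (ρ ⟨w + -w', 0⟩)
        / (Module.finrank ℂ V : ℂ) := by
  have hinv : ((⟨w', 0⟩ : Heis F n))⁻¹ = ⟨-w', 0⟩ := Heis.ext rfl neg_zero
  unfold hsForm
  rw [adj_rho hun, hinv, ← Module.End.mul_eq_comp, P_mul hcc, _root_.map_smul, smul_eq_mul]

end Aux

/-- Theorem 7.2.3, the Weyl transform: the operators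
`ρ(w,0)`, `w ∈ W`, form an orthogonal basis of `End(V)` with respect to the
normalized Hilbert–Schmidt inner product, each of norm `1`; i.e., the Weyl
transform `ℓ²(W) → HS(ρ_χ)` is a bijective isometry. -/
theorem weyl_transform_orthogonal_basis
    (F : Type) [Field F] [Fintype F] (hodd : Odd (Fintype.card F))
    (n : ℕ) (χ : AddChar F ℂ) (hχ : χ ≠ 1)
    {V : Type} [NormedAddCommGroup V] [InnerProductSpace ℂ V] [FiniteDimensional ℂ V]
    (ρ : Representation ℂ (Heis F n) V)
    (hirr : IsIrred ρ) (hcc : HasCentralChar ρ χ)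
    (hunitary : ∀ (h : Heis F n) (u v : V),
      (inner ℂ (ρ h u) (ρ h v) : ℂ) = inner ℂ u v) :
    -- each ρ(w,0) is a unit vector for the Hilbert–Schmidt inner product
    (∀ w : (Fin n → F) × (Fin n → F),
      hsForm (ρ ⟨w, 0⟩ : V →ₗ[ℂ] V) (ρ ⟨w, 0⟩ : V →ₗ[ℂ] V) = 1) ∧
    -- distinct w give orthogonal operators
    (∀ w w' : (Fin n → F) × (Fin n → F), w ≠ w' →
      hsForm (ρ ⟨w, 0⟩ : V →ₗ[ℂ] V) (ρ ⟨w', 0⟩ : V →ₗ[ℂ] V) = 0) ∧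
    -- the family is linearly independent and spans End(V):
    -- equivalently, the Weyl transform f ↦ Σ_w f(w)·ρ(w,0) is a bijective
    -- isometry from ℓ²(W) onto (End V, B)
    LinearIndependent ℂ (fun w : (Fin n → F) × (Fin n → F) => (ρ ⟨w, 0⟩ : V →ₗ[ℂ] V)) ∧
    Submodule.span ℂ
      (Set.range (fun w : (Fin n → F) × (Fin n → F) => (ρ ⟨w, 0⟩ : V →ₗ[ℂ] V))) = ⊤ := by
  classical
  have htwo : (2 : F) ≠ 0 := by
    intro h
    have h1 : (2 : ℕ) • (1 : F) = 0 := by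
      rw [nsmul_eq_mul, mul_one, Nat.cast_ofNat, h]
    have hdvd : addOrderOf (1 : F) ∣ 2 := addOrderOf_dvd_iff_nsmul_eq_zero.2 h1
    have hcard : addOrderOf (1 : F) ∣ Fintype.card F := addOrderOf_dvd_card
    rcases (Nat.dvd_prime Nat.prime_two).1 hdvd with h' | h'
    · exact one_ne_zero (AddMonoid.addOrderOf_eq_one_iff.1 h')
    · rw [h'] at hcard
      rw [← Nat.not_even_iff_odd] at hodd
      exact hodd (even_iff_two_dvd.2 hcard)
  have h2 : (2 : F)⁻¹ + (2 : F)⁻¹ = 1 := by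
    rw [← two_mul, mul_inv_cancel₀ htwo]
  haveI : Nontrivial V := ⟨⟨hirr.1.choose, 0, hirr.1.choose_spec⟩⟩
  have hd : (Module.finrank ℂ V : ℂ) ≠ 0 := Nat.cast_ne_zero.2 Module.finrank_pos.ne'
  -- norm one
  have hnorm : ∀ w : (Fin n → F) × (Fin n → F),
      hsForm (ρ ⟨w, 0⟩ : V →ₗ[ℂ] V) (ρ ⟨w, 0⟩ : V →ₗ[ℂ] V) = 1 := by
    intro w
    rw [hsForm_P hcc hunitary, symp_neg_right, Heis.symp_self, neg_zero, mul_zero,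
      AddChar.map_zero_eq_one, one_mul, add_neg_cancel, P_one, LinearMap.trace_one,
      div_self hd]
  -- orthogonality
  have horth : ∀ w w' : (Fin n → F) × (Fin n → F), w ≠ w' →
      hsForm (ρ ⟨w, 0⟩ : V →ₗ[ℂ] V) (ρ ⟨w', 0⟩ : V →ₗ[ℂ] V) = 0 := by
    intro w w' hww
    have hne : w + -w' ≠ 0 := by
      rw [← sub_eq_add_neg]
      exact sub_ne_zero.2 hww
    rw [hsForm_P hcc hunitary, trace_P_eq_zero hcc hχ h2 hne, mul_zero, zero_div]
  -- linear independence
  have hindep : LinearIndependent ℂ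
      (fun w : (Fin n → F) × (Fin n → F) => (ρ ⟨w, 0⟩ : V →ₗ[ℂ] V)) := by
    rw [Fintype.linearIndependent_iff]
    intro g hg w0
    have hlin : hsForm (∑ w, g w • (ρ ⟨w, 0⟩ : V →ₗ[ℂ] V)) (ρ ⟨w0, 0⟩ : V →ₗ[ℂ] V)
        = ∑ w, g w * hsForm (ρ ⟨w, 0⟩ : V →ₗ[ℂ] V) (ρ ⟨w0, 0⟩ : V →ₗ[ℂ] V) := by
      unfold hsForm
      rw [← Module.End.mul_eq_comp, Finset.sum_mul]
      simp only [smul_mul_assoc, _root_.map_sum, _root_.map_smul, smul_eq_mul,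
        Module.End.mul_eq_comp, Finset.sum_div, mul_div_assoc]
    rw [hg] at hlin
    have h0 : hsForm (0 : V →ₗ[ℂ] V) (ρ ⟨w0, 0⟩ : V →ₗ[ℂ] V) = 0 := by
      unfold hsForm
      rw [LinearMap.zero_comp, _root_.map_zero, zero_div]
    rw [h0] at hlin
    have hsingle : ∑ w, g w * hsForm (ρ ⟨w, 0⟩ : V →ₗ[ℂ] V) (ρ ⟨w0, 0⟩ : V →ₗ[ℂ] V)
        = g w0 * hsForm (ρ ⟨w0, 0⟩ : V →ₗ[ℂ] V) (ρ ⟨w0, 0⟩ : V →ₗ[ℂ] V) :=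
      Finset.sum_eq_single _ (fun w _ hw => by rw [horth w w0 hw, mul_zero])
        (fun h => absurd (Finset.mem_univ _) h)
    rw [hsingle, hnorm w0, mul_one] at hlin
    exact hlin.symm
  -- spanning
  have hspan : Submodule.span ℂ (Set.range
      (fun w : (Fin n → F) × (Fin n → F) => (ρ ⟨w, 0⟩ : V →ₗ[ℂ] V))) = ⊤ := by
    set P : (Fin n → F) × (Fin n → F) → (V →ₗ[ℂ] V) := fun w => ρ ⟨w, 0⟩ with hPdef
    have hPm : ∀ a b, P a * P b = χ ((2 : F)⁻¹ * symp a b) • P (a + b) := by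
      intro a b
      simp only [hPdef]
      exact P_mul hcc a b
    have hP1 : P 0 = 1 := by
      simp only [hPdef]
      exact P_one
    have hPinv' : ∀ v, P v * P (-v) = 1 := by
      intro v
      simp only [hPdef]
      exact P_mul_neg hcc v
    have hPinv : ∀ v, P (-v) * P v = 1 := by
      intro v
      have := hPinv' (-v)
      rwa [neg_neg] at this
    have hρP : ∀ (v : (Fin n → F) × (Fin n → F)) (t : F), ρ ⟨v, t⟩ = χ t • P v := by
      intro v t
      simp only [hPdef]
      exact rho_eq hcc v t
    refine le_antisymm le_top ?_
    intro X _
    set C : ((Fin n → F) × (Fin n → F)) → (V →ₗ[ℂ] V) :=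
      fun u => ∑ w, χ (symp u w) • (P w * X * P (-w)) with hCdef
    have hconj : ∀ (Y : V →ₗ[ℂ] V) (a b), P a * (P b * Y * P (-b)) * P (-a)
        = P (a + b) * Y * P (-(a + b)) := by
      intro Y a b
      have e2 : P (-b) * P (-a) = χ ((2 : F)⁻¹ * symp b a) • P (-(a + b)) := by
        have := hPm (-b) (-a)
        rwa [symp_neg_neg, ← neg_add_rev] at this
      calc P a * (P b * Y * P (-b)) * P (-a)
          = (P a * P b) * (Y * (P (-b) * P (-a))) := by simp only [mul_assoc]
        _ = (χ ((2 : F)⁻¹ * symp a b) * χ ((2 : F)⁻¹ * symp b a)) •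
              (P (a + b) * (Y * P (-(a + b)))) := by
            rw [hPm, e2]
            simp only [smul_mul_assoc, mul_smul_comm, smul_smul]
            rw [mul_comm (χ ((2 : F)⁻¹ * symp b a)) (χ ((2 : F)⁻¹ * symp a b))]
        _ = P (a + b) * Y * P (-(a + b)) := by
            rw [← AddChar.map_add_eq_mul]
            have hz : (2 : F)⁻¹ * symp a b + (2 : F)⁻¹ * symp b a = 0 := by
              rw [symp_anti a b]; ring
            rw [hz, AddChar.map_zero_eq_one, one_smul, mul_assoc]
    have hBC : ∀ u v, P v * C u * P (-v) = χ (symp v u) • C u := by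
      intro u v
      have step : P v * C u * P (-v)
          = ∑ w, χ (symp u w) • (P (v + w) * X * P (-(v + w))) := by
        simp only [hCdef]
        simp only [Finset.mul_sum, Finset.sum_mul, mul_smul_comm, smul_mul_assoc]
        exact Finset.sum_congr rfl fun w _ => by rw [hconj X v w]
      rw [step]
      simp only [hCdef]
      rw [Finset.smul_sum]
      refine Fintype.sum_equiv (Equiv.addLeft v) _ _ fun w => ?_
      simp only [Equiv.coe_addLeft]
      rw [smul_smul, ← AddChar.map_add_eq_mul, symp_add_right]
      have hz : symp v u + (symp u v + symp u w) = symp u w := by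
        rw [symp_anti v u]; ring
      rw [hz]
    have hCu : ∀ u, ∃ c : ℂ, C u = c • P u := by
      intro u
      have hcomm : ∀ g : Heis F n, ρ g * (C u * P (-u)) = (C u * P (-u)) * ρ g := by
        intro g
        obtain ⟨v, t⟩ := g
        rw [hρP v t]
        have h1 : P v * C u = χ (symp v u) • (C u * P v) := by
          calc P v * C u = P v * C u * (P (-v) * P v) := by rw [hPinv, mul_one]
            _ = (P v * C u * P (-v)) * P v := by simp only [mul_assoc]
            _ = (χ (symp v u) • C u) * P v := by rw [hBC]
            _ = χ (symp v u) • (C u * P v) := smul_mul_assoc _ _ _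
        have key : P v * (C u * P (-u)) = (C u * P (-u)) * P v := by
          calc P v * (C u * P (-u)) = (P v * C u) * P (-u) := by rw [mul_assoc]
            _ = χ (symp v u) • (C u * (P v * P (-u))) := by
                rw [h1, smul_mul_assoc, mul_assoc]
            _ = χ (symp v u) • (C u * (χ ((2 : F)⁻¹ * symp v (-u)) • P (v + -u))) := by
                rw [hPm v (-u)]
            _ = (χ (symp v u) * χ ((2 : F)⁻¹ * symp v (-u))) • (C u * P (v + -u)) := by
                rw [mul_smul_comm, smul_smul]
            _ = χ ((2 : F)⁻¹ * symp (-u) v) • (C u * P (v + -u)) := by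
                congr 1
                rw [← AddChar.map_add_eq_mul]
                congr 1
                rw [symp_neg_right, symp_neg_left, symp_anti u v]
                linear_combination (-(symp v u)) * h2
            _ = χ ((2 : F)⁻¹ * symp (-u) v) • (C u * P (-u + v)) := by
                rw [add_comm v (-u)]
            _ = C u * (χ ((2 : F)⁻¹ * symp (-u) v) • P (-u + v)) :=
                (mul_smul_comm _ _ _).symm
            _ = C u * (P (-u) * P v) := by rw [← hPm (-u) v]
            _ = (C u * P (-u)) * P v := by rw [mul_assoc]
        rw [smul_mul_assoc, mul_smul_comm, key]
      obtain ⟨c, hc⟩ := schur hirr (C u * P (-u)) hcomm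
      refine ⟨c, ?_⟩
      calc C u = C u * (P (-u) * P u) := by rw [hPinv, mul_one]
        _ = (C u * P (-u)) * P u := by rw [mul_assoc]
        _ = (c • 1) * P u := by rw [hc]
        _ = c • P u := by rw [smul_mul_assoc, one_mul]
    have hsumC : ∑ u, C u
        = ((Fintype.card ((Fin n → F) × (Fin n → F)) : ℂ)) • X := by
      simp only [hCdef]
      rw [Finset.sum_comm]
      calc ∑ w, ∑ u : (Fin n → F) × (Fin n → F), χ (symp u w) • (P w * X * P (-w))
          = ∑ w, (∑ u : (Fin n → F) × (Fin n → F), χ (symp u w)) • (P w * X * P (-w)) := by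
            refine Finset.sum_congr rfl fun w _ => ?_
            rw [Finset.sum_smul]
        _ = (∑ u : (Fin n → F) × (Fin n → F), χ (symp u 0)) • (P 0 * X * P (-0)) :=
            Finset.sum_eq_single _
              (fun w _ hw => by rw [sum_symp_char χ hχ hw, zero_smul])
              (fun h => absurd (Finset.mem_univ _) h)
        _ = ((Fintype.card ((Fin n → F) × (Fin n → F)) : ℂ)) • X := by
            simp only [symp_zero_right, AddChar.map_zero_eq_one, neg_zero, hP1,
              one_mul, mul_one]
            rw [Finset.sum_const, Finset.card_univ, nsmul_eq_mul, mul_one]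
    have hN : ((Fintype.card ((Fin n → F) × (Fin n → F)) : ℂ)) ≠ 0 :=
      Nat.cast_ne_zero.2 Fintype.card_ne_zero
    have hX : X = (Fintype.card ((Fin n → F) × (Fin n → F)) : ℂ)⁻¹ • ∑ u, C u := by
      rw [hsumC, smul_smul, inv_mul_cancel₀ hN, one_smul]
    rw [hX]
    refine Submodule.smul_mem _ _ (Submodule.sum_mem _ fun u _ => ?_)
    obtain ⟨c, hc⟩ := hCu u
    rw [hc]
    exact Submodule.smul_mem _ _ (Submodule.subset_span ⟨u, rfl⟩)
  exact ⟨hnorm, horth, hindep, hspan⟩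


end Stmt4
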